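/- L(Q'/Q) = Q'/Q - (11/5)·Q^2·Q' on ℝ, and consequently (L(Q'/Q))' = -(36/5)·Q^3 + (99/25)·Q^6. -/

import Mathlib

noncomputable def Q : ℝ → ℝ := fun x => (5/2 : ℝ) ^ ((1:ℝ)/3) * (Real.cosh (3*x/2)) ^ (-(2:ℝ)/3)

noncomputable def L (f : ℝ → ℝ) : ℝ → ℝ := fun x => -(deriv (deriv f)) x + f x - 4 * (Q x)^3 * f x

lemma hQpos (x : ℝ) : 0 < Q x :=
  mul_pos (Real.rpow_pos_of_pos (by norm_num) _) (Real.rpow_pos_of_pos (Real.cosh_pos _) _)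

lemma harg (x : ℝ) : HasDerivAt (fun y : ℝ => 3*y/2) (3/2) x := by
  simpa using ((hasDerivAt_id x).const_mul (3:ℝ)).div_const 2

lemma hcosh' (x : ℝ) : HasDerivAt (fun y => Real.cosh (3*y/2)) (Real.sinh (3*x/2) * (3/2)) x :=
  (Real.hasDerivAt_cosh _).comp x (harg x)

lemma hsinh' (x : ℝ) : HasDerivAt (fun y => Real.sinh (3*y/2)) (Real.cosh (3*x/2) * (3/2)) x :=
  (Real.hasDerivAt_sinh _).comp x (harg x)

lemma hQder (x : ℝ) :
    HasDerivAt Q (-(Real.sinh (3*x/2) / Real.cosh (3*x/2)) * Q x) x := by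
  have hc : (0:ℝ) < Real.cosh (3*x/2) := Real.cosh_pos _
  have h := ((hcosh' x).rpow_const (p := -(2:ℝ)/3) (Or.inl hc.ne')).const_mul
      ((5/2 : ℝ) ^ ((1:ℝ)/3))
  convert! h using 1
  have h2 : Real.cosh (3*x/2) ^ (-(2:ℝ)/3 - 1)
      = Real.cosh (3*x/2) ^ (-(2:ℝ)/3) / Real.cosh (3*x/2) := by
    rw [Real.rpow_sub hc, Real.rpow_one]
  rw [h2]
  simp only [Q]
  field_simp

lemma f_eq : (fun y => deriv Q y / Q y) = fun y => -(Real.sinh (3*y/2) / Real.cosh (3*y/2)) := by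
  funext y
  rw [(hQder y).deriv, mul_div_assoc, div_self (hQpos y).ne', mul_one]

lemma hQ3 (x : ℝ) : Q x ^ 3 = 5/2 / Real.cosh (3*x/2)^2 := by
  have hc : (0:ℝ) < Real.cosh (3*x/2) := Real.cosh_pos _
  have h1 : Q x ^ 3 = ((5/2:ℝ) ^ ((1:ℝ)/3)) ^ (3:ℕ) * (Real.cosh (3*x/2) ^ (-(2:ℝ)/3)) ^ (3:ℕ) := by
    rw [Q]; ring
  rw [h1, ← Real.rpow_natCast ((5/2:ℝ) ^ ((1:ℝ)/3)) 3,
    ← Real.rpow_natCast (Real.cosh (3*x/2) ^ (-(2:ℝ)/3)) 3,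
    ← Real.rpow_mul (by norm_num), ← Real.rpow_mul hc.le]
  norm_num
  ring

lemma hF (x : ℝ) : HasDerivAt (fun y => -(Real.sinh (3*y/2) / Real.cosh (3*y/2)))
    (-(3/2) / Real.cosh (3*x/2)^2) x := by
  have hc : (0:ℝ) < Real.cosh (3*x/2) := Real.cosh_pos _
  have h := ((hsinh' x).fun_div (hcosh' x) hc.ne').fun_neg
  convert! h using 1
  have := Real.cosh_sq_sub_sinh_sq (3*x/2)
  field_simp
  nlinarith [this]

lemma hG (x : ℝ) : HasDerivAt (fun y => -(3/2) / Real.cosh (3*y/2)^2)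
    (9/2 * Real.sinh (3*x/2) / Real.cosh (3*x/2)^3) x := by
  have hc : (0:ℝ) < Real.cosh (3*x/2) := Real.cosh_pos _
  have hd : HasDerivAt (fun y => Real.cosh (3*y/2)^2)
      (2 * Real.cosh (3*x/2) ^ 1 * (Real.sinh (3*x/2) * (3/2))) x := by
    simpa using (hcosh' x).fun_pow 2
  have h := (hasDerivAt_const x (-(3/2):ℝ)).div hd (by positivity)
  convert! h using 1
  field_simp
  ring

lemma Lf_eq : L (fun y => deriv Q y / Q y)
    = fun y => -(Real.sinh (3*y/2) / Real.cosh (3*y/2))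
        + (11/2) * Real.sinh (3*y/2) / Real.cosh (3*y/2)^3 := by
  funext y
  have hc : (0:ℝ) < Real.cosh (3*y/2) := Real.cosh_pos _
  rw [f_eq]
  simp only [L]
  have hd1 : deriv (fun y => -(Real.sinh (3*y/2) / Real.cosh (3*y/2)))
      = fun z => -(3/2) / Real.cosh (3*z/2)^2 := funext fun z => (hF z).deriv
  simp only [hd1, (hG y).deriv, hQ3 y]
  field_simp
  ring

theorem L_logderiv_Q :
    (∀ x : ℝ, L (fun y => deriv Q y / Q y) x = deriv Q x / Q x - (11/5) * (Q x)^2 * deriv Q x) ∧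
    (∀ x : ℝ, deriv (L (fun y => deriv Q y / Q y)) x = -(36/5) * (Q x)^3 + (99/25) * (Q x)^6) := by
  constructor
  · intro x
    have hc : (0:ℝ) < Real.cosh (3*x/2) := Real.cosh_pos _
    rw [Lf_eq, (hQder x).deriv, mul_div_assoc, div_self (hQpos x).ne', mul_one]
    have h3 : (11/5 : ℝ) * (Q x)^2 * (-(Real.sinh (3*x/2) / Real.cosh (3*x/2)) * Q x)
        = -(Real.sinh (3*x/2) / Real.cosh (3*x/2)) * ((11/5) * (5/2 / Real.cosh (3*x/2)^2)) := by
      rw [show (11/5 : ℝ) * (Q x)^2 * (-(Real.sinh (3*x/2) / Real.cosh (3*x/2)) * Q x)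
          = -(Real.sinh (3*x/2) / Real.cosh (3*x/2)) * ((11/5) * (Q x ^ 3)) by ring, hQ3]
    rw [h3]
    field_simp
    ring
  · intro x
    have hc : (0:ℝ) < Real.cosh (3*x/2) := Real.cosh_pos _
    have hH : HasDerivAt (fun y => -(Real.sinh (3*y/2) / Real.cosh (3*y/2))
        + (11/2) * Real.sinh (3*y/2) / Real.cosh (3*y/2)^3)
        (-(36/5) * (Q x)^3 + (99/25) * (Q x)^6) x := by
      have hd : HasDerivAt (fun y => Real.cosh (3*y/2)^3)
          (3 * Real.cosh (3*x/2) ^ 2 * (Real.sinh (3*x/2) * (3/2))) x := by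
        simpa using (hcosh' x).fun_pow 3
      have hn : HasDerivAt (fun y => (11/2 : ℝ) * Real.sinh (3*y/2))
          ((11/2) * (Real.cosh (3*x/2) * (3/2))) x := (hsinh' x).const_mul _
      have h2 := (hF x).fun_add (hn.fun_div hd (by positivity))
      convert! h2 using 1
      have hq6 : Q x ^ 6 = (Q x ^ 3)^2 := by ring
      rw [hq6, hQ3]
      have hkey : (11/2:ℝ) * Real.sinh (3*x/2) * (3 * Real.cosh (3*x/2)^2 * (Real.sinh (3*x/2) * (3/2)))
          = (99/4) * Real.cosh (3*x/2)^2 * (Real.cosh (3*x/2)^2 - 1) := by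
        rw [show (11/2:ℝ) * Real.sinh (3*x/2) * (3 * Real.cosh (3*x/2)^2 * (Real.sinh (3*x/2) * (3/2)))
            = (99/4) * Real.cosh (3*x/2)^2 * (Real.sinh (3*x/2)^2) by ring, Real.sinh_sq]
      rw [hkey]
      field_simp
      ring
    rw [Lf_eq]
    exact hH.deriv
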